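/- Let S⁺, S⁻ ⊆ ℤⁿ be finite nonempty sets, put Δ⁺ := convexHull ℝ S⁺ and Δ⁻ := convexHull ℝ S⁻, and assume Δ⁺ ⊆ Δ⁻. Then for every connected component C of Δ⁻ \ Δ⁺ there exists a finite set S ⊆ ℤⁿ such that C ∪ Δ⁺ = convexHull ℝ S. In other words, the union of Δ⁺ with any connected component of Δ⁻ \ Δ⁺ is again a lattice polytope. -/

import Mathlib

/-- The canonical inclusion of the standard lattice `ℤⁿ` into `ℝⁿ`. -/
def intVec {n : ℕ} (v : Fin n → ℤ) : Fin n → ℝ := fun i => (v i : ℝ)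

/-- Let `S⁺, S⁻ ⊆ ℤⁿ` be finite nonempty sets, put `Δ⁺ := convexHull ℝ S⁺` and
`Δ⁻ := convexHull ℝ S⁻`, and assume `Δ⁺ ⊆ Δ⁻`.  Then for every connected component `C` of
`Δ⁻ \ Δ⁺` there exists a finite set `S ⊆ ℤⁿ` such that `C ∪ Δ⁺ = convexHull ℝ S`, i.e.
the union of `Δ⁺` with any connected component of `Δ⁻ \ Δ⁺` is again a lattice polytope.
(Compact case of Proposition 13 of the paper.) -/
theorem union_component_is_lattice_polytope {n : ℕ} (Sp Sm : Finset (Fin n → ℤ))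
    (hSp : Sp.Nonempty) (hSm : Sm.Nonempty)
    (Δp Δm : Set (Fin n → ℝ))
    (hΔp : Δp = convexHull ℝ (intVec '' ↑Sp))
    (hΔm : Δm = convexHull ℝ (intVec '' ↑Sm))
    (hsub : Δp ⊆ Δm)
    (x : Fin n → ℝ) (hx : x ∈ Δm \ Δp) :
    ∃ S : Finset (Fin n → ℤ),
      connectedComponentIn (Δm \ Δp) x ∪ Δp = convexHull ℝ (intVec '' ↑S) := by
  classical
  set Z : Set (Fin n → ℝ) := Δm \ Δp with hZdef
  have hΔpconv : Convex ℝ Δp := hΔp ▸ convex_convexHull ℝ _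
  have hΔmconv : Convex ℝ Δm := hΔm ▸ convex_convexHull ℝ _
  have hΔpclosed : IsClosed Δp := hΔp ▸ (Sp.finite_toSet.image intVec).isClosed_convexHull (𝕜 := ℝ)
  have hΔmcompact : IsCompact Δm := hΔm ▸ (Sm.finite_toSet.image intVec).isCompact_convexHull (𝕜 := ℝ)
  set C : Set (Fin n → ℝ) := connectedComponentIn Z x with hCdef
  have hCZ : C ⊆ Z := connectedComponentIn_subset _ _
  have hxC : x ∈ C := mem_connectedComponentIn hx
  -- any preconnected subset of `Z` meeting `C` is contained in `C`
  have hjoin : ∀ {s : Set (Fin n → ℝ)}, IsPreconnected s → s ⊆ Z → ∀ {c}, c ∈ C → c ∈ s →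
      s ⊆ C := by
    intro s hs hsZ c hcC hcs
    have h := hs.subset_connectedComponentIn hcs hsZ
    exact h.trans (connectedComponentIn_eq hcC).symm.subset
  -- a point on a segment towards a point of `C`, with the piece in between avoiding `Δp`,
  -- lies in `C`
  have conn : ∀ (a b : Fin n → ℝ), a ∈ Δm → b ∈ C → ∀ s : ℝ, 0 ≤ s → s ≤ 1 →
      (∀ t : ℝ, s ≤ t → t ≤ 1 → (AffineMap.lineMap a b t : Fin n → ℝ) ∉ Δp) →
      (AffineMap.lineMap a b s : Fin n → ℝ) ∈ C := by
    intro a b ha hb s hs0 hs1 havoid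
    have hbm : b ∈ Δm := (hCZ hb).1
    have hfc : Continuous (AffineMap.lineMap a b : ℝ →ᵃ[ℝ] (Fin n → ℝ)) :=
      AffineMap.lineMap_continuous
    set S := (AffineMap.lineMap a b : ℝ →ᵃ[ℝ] (Fin n → ℝ)) '' Set.Icc s 1 with hSdef
    have hSpre : IsPreconnected S :=
      ((convex_Icc s 1).isPreconnected).image _ hfc.continuousOn
    have hSZ : S ⊆ Z := by
      rintro y ⟨t, ht, rfl⟩
      refine ⟨?_, havoid t ht.1 ht.2⟩
      have : (AffineMap.lineMap a b t : Fin n → ℝ) ∈ segment ℝ a b := by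
        rw [segment_eq_image_lineMap]
        exact ⟨t, ⟨hs0.trans ht.1, ht.2⟩, rfl⟩
      exact hΔmconv.segment_subset ha hbm this
    have hbS : b ∈ S := ⟨1, ⟨hs1, le_refl 1⟩, by simp⟩
    exact hjoin hSpre hSZ hb hbS ⟨s, ⟨le_refl s, hs1⟩, rfl⟩
  -- convexity of `C ∪ Δp`
  have hKconv : Convex ℝ (C ∪ Δp) := by
    rw [convex_iff_segment_subset]
    rintro a ha b hb p hp
    by_cases hpp : p ∈ Δp
    · exact Or.inr hpp
    left
    have ham : a ∈ Δm := ha.elim (fun h => (hCZ h).1) (fun h => hsub h)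
    have hbm : b ∈ Δm := hb.elim (fun h => (hCZ h).1) (fun h => hsub h)
    rw [segment_eq_image_lineMap] at hp
    obtain ⟨s, hs, hps⟩ := hp
    subst hps
    have hT : Convex ℝ ((AffineMap.lineMap a b : ℝ →ᵃ[ℝ] (Fin n → ℝ)) ⁻¹' Δp) :=
      hΔpconv.affine_preimage _
    by_cases hR : ∃ t : ℝ, s ≤ t ∧ t ≤ 1 ∧ (AffineMap.lineMap a b t : Fin n → ℝ) ∈ Δp
    · -- the right piece meets `Δp`; then the left piece avoids it, connect to `a`
      obtain ⟨t₂, hst₂, ht₂1, ht₂p⟩ := hR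
      have hleft : ∀ t : ℝ, 0 ≤ t → t ≤ s → (AffineMap.lineMap a b t : Fin n → ℝ) ∉ Δp := by
        intro t ht0 hts hmem
        exact hpp (hT.ordConnected.out hmem ht₂p ⟨hts, hst₂⟩)
      have haΔp : a ∉ Δp := by
        have := hleft 0 le_rfl hs.1
        simpa using this
      have haC : a ∈ C := ha.resolve_right haΔp
      have h := conn b a hbm haC (1 - s) (by linarith [hs.2]) (by linarith [hs.1]) ?_
      · rwa [← AffineMap.lineMap_apply_one_sub, sub_sub_cancel] at h
      · intro t h1t ht1
        rw [← AffineMap.lineMap_apply_one_sub]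
        exact hleft (1 - t) (by linarith) (by linarith)
    · -- the right piece avoids `Δp`; connect to `b`
      push_neg at hR
      have hbΔp : b ∉ Δp := by
        have := hR 1 hs.2 le_rfl
        simpa using this
      have hbC : b ∈ C := hb.resolve_right hbΔp
      exact conn a b ham hbC s hs.1 hs.2 hR
  -- closedness of `C ∪ Δp`
  have hKclosed : IsClosed (C ∪ Δp) := by
    apply isClosed_of_closure_subset
    intro y hy
    rw [closure_union, hΔpclosed.closure_eq] at hy
    rcases hy with hyC | hyp
    · by_cases hyΔp : y ∈ Δp
      · exact Or.inr hyΔp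
      left
      have hym : y ∈ Δm := by
        have h1 : closure C ⊆ closure Δm := closure_mono (fun z hz => (hCZ hz).1)
        rw [hΔmcompact.isClosed.closure_eq] at h1
        exact h1 hyC
      have hpre : IsPreconnected (insert y C) :=
        isPreconnected_connectedComponentIn.subset_closure (Set.subset_insert _ _)
          (Set.insert_subset_iff.mpr ⟨hyC, subset_closure⟩)
      have hsubZ : insert y C ⊆ Z := Set.insert_subset_iff.mpr ⟨⟨hym, hyΔp⟩, hCZ⟩
      exact hjoin hpre hsubZ hxC (Set.mem_insert_iff.mpr (Or.inr hxC)) (Set.mem_insert y C)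
    · exact Or.inr hyp
  have hKsub : C ∪ Δp ⊆ Δm := Set.union_subset (fun z hz => (hCZ hz).1) hsub
  have hKcompact : IsCompact (C ∪ Δp) := hΔmcompact.of_isClosed_subset hKclosed hKsub
  -- extreme points of `C ∪ Δp` are lattice points
  have hext : (C ∪ Δp).extremePoints ℝ ⊆ intVec '' ↑(Sp ∪ Sm) := by
    intro v hv
    obtain ⟨hvK, hvext⟩ := mem_extremePoints.mp hv
    rcases hvK with hvC | hvp
    · -- `v ∈ C`: show it is an extreme point of `Δm`
      have hvm : v ∈ Δm := (hCZ hvC).1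
      have hvnp : v ∉ Δp := (hCZ hvC).2
      have hvext' : v ∈ Δm.extremePoints ℝ := by
        refine mem_extremePoints.mpr ⟨hvm, ?_⟩
        intro a ha b hb hseg
        obtain ⟨ε, hε, hball⟩ := Metric.isOpen_iff.mp hΔpclosed.isOpen_compl v hvnp
        obtain ⟨θ₁, θ₂, hθ₁, hθ₂, hθsum, hθeq⟩ := hseg
        set r : ℝ := ‖a - v‖ + ‖b - v‖ + 1 with hrdef
        have hr : 0 < r := by positivity
        set t : ℝ := min 1 (ε / r) with htdef
        have ht0 : 0 < t := lt_min one_pos (div_pos hε hr)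
        have ht1 : t ≤ 1 := min_le_left _ _
        have htr : t * r ≤ ε := (le_div_iff₀ hr).mp (min_le_right _ _)
        set a' := (1 - t) • v + t • a with ha'def
        set b' := (1 - t) • v + t • b with hb'def
        have ha'v : a' - v = t • (a - v) := by rw [ha'def]; module
        have hb'v : b' - v = t • (b - v) := by rw [hb'def]; module
        have hna : ‖a' - v‖ < ε := by
          rw [ha'v, norm_smul, Real.norm_eq_abs, abs_of_pos ht0]
          nlinarith [norm_nonneg (a - v), norm_nonneg (b - v)]
        have hnb : ‖b' - v‖ < ε := by
          rw [hb'v, norm_smul, Real.norm_eq_abs, abs_of_pos ht0]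
          nlinarith [norm_nonneg (a - v), norm_nonneg (b - v)]
        have ha'm : a' ∈ Δm := hΔmconv hvm ha (by linarith) ht0.le (by ring)
        have hb'm : b' ∈ Δm := hΔmconv hvm hb (by linarith) ht0.le (by ring)
        have hvseg : v ∈ openSegment ℝ a' b' := by
          refine ⟨θ₁, θ₂, hθ₁, hθ₂, hθsum, ?_⟩
          have : θ₁ • a' + θ₂ • b' = (θ₁ + θ₂) • ((1 - t) • v) + t • (θ₁ • a + θ₂ • b) := by
            rw [ha'def, hb'def]; module
          rw [this, hθsum, hθeq, one_smul]
          module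
        have hsegZ : segment ℝ a' b' ⊆ Z := by
          intro z hz
          refine ⟨hΔmconv.segment_subset ha'm hb'm hz, ?_⟩
          have hzball : z ∈ Metric.ball v ε :=
            (convex_ball v ε).segment_subset (mem_ball_iff_norm.mpr hna)
              (mem_ball_iff_norm.mpr hnb) hz
          exact hball hzball
        have hsegC : segment ℝ a' b' ⊆ C :=
          hjoin (convex_segment a' b').isPreconnected hsegZ hvC
            (openSegment_subset_segment ℝ a' b' hvseg)
        have hres := hvext a' (Or.inl (hsegC (left_mem_segment ℝ a' b')))
          b' (Or.inl (hsegC (right_mem_segment ℝ a' b'))) hvseg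
        constructor
        · have h0 : t • (a - v) = 0 := by rw [← ha'v, hres.1, sub_self]
          have := (smul_eq_zero.mp h0).resolve_left (ne_of_gt ht0)
          rwa [sub_eq_zero] at this
        · have h0 : t • (b - v) = 0 := by rw [← hb'v, hres.2, sub_self]
          have := (smul_eq_zero.mp h0).resolve_left (ne_of_gt ht0)
          rwa [sub_eq_zero] at this
      rw [hΔm] at hvext'
      obtain ⟨u, hu, rfl⟩ := extremePoints_convexHull_subset hvext'
      exact ⟨u, by simpa using Or.inr hu, rfl⟩
    · -- `v ∈ Δp`: it is an extreme point of `Δp`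
      have hvext' : v ∈ Δp.extremePoints ℝ :=
        mem_extremePoints.mpr ⟨hvp, fun a ha b hb hseg => hvext a (Or.inr ha) b (Or.inr hb) hseg⟩
      rw [hΔp] at hvext'
      obtain ⟨u, hu, rfl⟩ := extremePoints_convexHull_subset hvext'
      exact ⟨u, by simpa using Or.inl hu, rfl⟩
  -- conclude via Krein–Milman
  have hKM := closure_convexHull_extremePoints hKcompact hKconv
  refine ⟨(Sp ∪ Sm).filter (fun u => intVec u ∈ C ∪ Δp), ?_⟩
  have himg : (C ∪ Δp).extremePoints ℝ ⊆
      intVec '' ↑((Sp ∪ Sm).filter (fun u => intVec u ∈ C ∪ Δp)) := by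
    intro v hv
    obtain ⟨u, hu, rfl⟩ := hext hv
    refine ⟨u, Finset.mem_coe.mpr (Finset.mem_filter.mpr ⟨by simpa using hu, extremePoints_subset hv⟩), rfl⟩
  apply Set.Subset.antisymm
  · have h2 : closure (convexHull ℝ ((C ∪ Δp).extremePoints ℝ)) ⊆
        closure (convexHull ℝ (intVec '' ↑((Sp ∪ Sm).filter (fun u => intVec u ∈ C ∪ Δp)))) :=
      closure_mono (convexHull_mono himg)
    rw [hKM] at h2
    have h3 : IsClosed (convexHull ℝ
        (intVec (n := n) '' ↑((Sp ∪ Sm).filter (fun u => intVec u ∈ C ∪ Δp)))) :=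
      ((((Sp ∪ Sm).filter (fun u => intVec u ∈ C ∪ Δp)).finite_toSet.image intVec)).isClosed_convexHull (𝕜 := ℝ)
    rwa [h3.closure_eq] at h2
  · refine convexHull_min ?_ hKconv
    rintro y ⟨u, hu, rfl⟩
    exact (Finset.mem_filter.mp (Finset.mem_coe.mp hu)).2
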